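/- Let A and B be finite types and let φ₀, φ₁ : A × B → ℂ be unit vectors. Then there exists a unitary matrix S ∈ Matrix.unitaryGroup A ℂ such that |⟨(S ⊗ I).mulVec φ₀, φ₁⟩| = F(ptrA φ₀, ptrA φ₁). (Uhlmann's theorem in local-unitary form: the fidelity of the reduced states is attained as the overlap achievable by acting with a unitary on the A system alone.) -/

import Mathlib

open scoped ComplexOrder
open Matrix

noncomputable section

/-- Partial trace over `A` of the outer product `|ψ⟩⟨ψ|`:
`(ptrA ψ) j q = ∑ i, ψ (i, j) * conj (ψ (i, q))`. -/
def ptrA {A B : Type*} [Fintype A] (ψ : A × B → ℂ) : Matrix B B ℂ :=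
  fun j q => ∑ i : A, ψ (i, j) * (starRingEnd ℂ) (ψ (i, q))

/-- The Kronecker product `S ⊗ I` with the identity on `B`, as a matrix on `A × B`. -/
def kronId {A B : Type*} [DecidableEq B] (S : Matrix A A ℂ) : Matrix (A × B) (A × B) ℂ :=
  Matrix.kroneckerMap (· * ·) S (1 : Matrix B B ℂ)

/-- `ptrA ψ` is a Gram matrix, hence positive semidefinite. -/
lemma ptrA_posSemidef {A B : Type*} [Fintype A] [Fintype B] (ψ : A × B → ℂ) :
    (ptrA ψ).PosSemidef := by
  set V : Matrix A B ℂ := Matrix.of fun i j => (starRingEnd ℂ) (ψ (i, j)) with hV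
  have h := Matrix.posSemidef_conjTranspose_mul_self V
  have heq : ptrA ψ = Vᴴ * V := by
    ext j q
    simp [Matrix.mul_apply, Matrix.conjTranspose_apply, ptrA, hV, mul_comm]
  rw [heq]; exact h

/-- The positive semidefinite square root, as `Matrix.PosSemidef.sqrt` was defined in the
older Mathlib (removed since). -/
noncomputable def Matrix.PosSemidef.sqrt {n 𝕜 : Type*} [Fintype n] [DecidableEq n] [RCLike 𝕜]
    {A : Matrix n n 𝕜} (hA : A.PosSemidef) : Matrix n n 𝕜 :=
  hA.1.eigenvectorUnitary.1 * diagonal ((↑) ∘ (√·) ∘ hA.1.eigenvalues) *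
    (star hA.1.eigenvectorUnitary : Matrix n n 𝕜)

lemma Matrix.PosSemidef.posSemidef_sqrt {n 𝕜 : Type*} [Fintype n] [DecidableEq n] [RCLike 𝕜]
    {A : Matrix n n 𝕜} (hA : A.PosSemidef) : hA.sqrt.PosSemidef := by
  apply PosSemidef.mul_mul_conjTranspose_same
  refine posSemidef_diagonal_iff.mpr fun i ↦ ?_
  rw [Function.comp_apply, RCLike.nonneg_iff]
  constructor
  · simp only [RCLike.ofReal_re]; exact Real.sqrt_nonneg _
  · simp only [RCLike.ofReal_im]

lemma sqrt_mul_mul_sqrt_posSemidef {B : Type*} [Fintype B] [DecidableEq B]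
    {ρ σ : Matrix B B ℂ} (hρ : ρ.PosSemidef) (hσ : σ.PosSemidef) :
    (hρ.sqrt * σ * hρ.sqrt).PosSemidef := by
  have h := hσ.mul_mul_conjTranspose_same hρ.sqrt
  rwa [hρ.posSemidef_sqrt.isHermitian.eq] at h

/-- The fidelity `F(ρ, σ) = tr √(√ρ * σ * √ρ)` of two positive semidefinite matrices. -/
def fidelity {B : Type*} [Fintype B] [DecidableEq B] {ρ σ : Matrix B B ℂ}
    (hρ : ρ.PosSemidef) (hσ : σ.PosSemidef) : ℝ :=
  ((sqrt_mul_mul_sqrt_posSemidef hρ hσ).sqrt.trace).re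

section
open scoped MatrixOrder
lemma Matrix.PosSemidef.sqrt_eq_cfcSqrt {n : Type*} [Fintype n] [DecidableEq n]
    {A : Matrix n n ℂ} (hA : A.PosSemidef) : hA.sqrt = CFC.sqrt A := by
  rw [CFC.sqrt_eq_cfc, cfc_nnreal_eq_real _ A, hA.1.cfc_eq, Matrix.IsHermitian.cfc,
    Unitary.conjStarAlgAut_apply, Matrix.PosSemidef.sqrt]
  congr 3
  funext i
  simp [Real.coe_toNNReal', max_eq_left (hA.eigenvalues_nonneg i)]

lemma Matrix.PosSemidef.sqrt_mul_self {n : Type*} [Fintype n] [DecidableEq n]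
    {A : Matrix n n ℂ} (hA : A.PosSemidef) : hA.sqrt * hA.sqrt = A := by
  rw [hA.sqrt_eq_cfcSqrt]
  exact CFC.sqrt_mul_sqrt_self A hA.nonneg

lemma Matrix.PosSemidef.eq_sqrt_of_sq_eq {n : Type*} [Fintype n] [DecidableEq n]
    {A : Matrix n n ℂ} (hA : A.PosSemidef) (B : Matrix n n ℂ) (hB : B.PosSemidef)
    (hAB : B ^ 2 = A) : B = hA.sqrt := by
  rw [hA.sqrt_eq_cfcSqrt]
  exact (CFC.sqrt_unique (by rw [← sq]; exact hAB) hB.nonneg).symm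
end

/-- Polar decomposition of a square complex matrix. -/
lemma polar_exists {A : Type*} [Fintype A] [DecidableEq A] (T : Matrix A A ℂ) :
    ∃ W ∈ Matrix.unitaryGroup A ℂ,
      T = W * (Matrix.posSemidef_conjTranspose_mul_self T).sqrt := by
  set hG : (Tᴴ * T).PosSemidef := Matrix.posSemidef_conjTranspose_mul_self T
  set U : Matrix A A ℂ := (hG.1.eigenvectorUnitary : Matrix A A ℂ) with hU
  have hUmem : U ∈ Matrix.unitaryGroup A ℂ := hG.1.eigenvectorUnitary.2
  have hUU : star U * U = 1 := Matrix.mem_unitaryGroup_iff'.mp hUmem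
  have hUU' : U * star U = 1 := Matrix.mem_unitaryGroup_iff.mp hUmem
  set d : A → ℝ := hG.1.eigenvalues with hd
  have hdnn : ∀ i, 0 ≤ d i := hG.eigenvalues_nonneg
  have hspec : Tᴴ * T = U * Matrix.diagonal (Complex.ofReal ∘ d) * star U :=
    by have := hG.1.spectral_theorem; rwa [Unitary.conjStarAlgAut_apply] at this
  have hsqrt : hG.sqrt = U * Matrix.diagonal ((↑) ∘ Real.sqrt ∘ d) * star U := rfl
  set T₁ : Matrix A A ℂ := T * U with hT₁def
  have hT₁ : T₁ᴴ * T₁ = Matrix.diagonal (Complex.ofReal ∘ d) := by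
    have : T₁ᴴ * T₁ = star U * (Tᴴ * T) * U := by
      simp [hT₁def, Matrix.conjTranspose_mul, Matrix.mul_assoc, Matrix.star_eq_conjTranspose]
    rw [this, hspec]
    calc star U * (U * Matrix.diagonal (Complex.ofReal ∘ d) * star U) * U
        = (star U * U) * Matrix.diagonal (Complex.ofReal ∘ d) * (star U * U) := by
          noncomm_ring [Matrix.mul_assoc]
      _ = _ := by rw [hUU, one_mul, mul_one]
  -- columns of T₁
  have hcol : ∀ i j, (∑ a, (starRingEnd ℂ) (T₁ a i) * T₁ a j)
      = Matrix.diagonal (Complex.ofReal ∘ d) i j := by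
    intro i j
    rw [← hT₁]
    simp [Matrix.mul_apply, Matrix.conjTranspose_apply]
  -- zero columns
  have hzero : ∀ j, d j = 0 → ∀ a, T₁ a j = 0 := by
    intro j hj a
    have h := hcol j j
    simp only [Matrix.diagonal_apply_eq, Function.comp_apply, hj, Complex.ofReal_zero] at h
    have h' : ∑ a, Complex.normSq (T₁ a j) = 0 := by
      have h2 : ((∑ a, Complex.normSq (T₁ a j) : ℝ) : ℂ) = 0 := by
        rw [Complex.ofReal_sum]
        simpa [Complex.normSq_eq_conj_mul_self] using h
      exact_mod_cast h2
    have h3 := (Finset.sum_eq_zero_iff_of_nonneg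
      (fun a _ => Complex.normSq_nonneg (T₁ a j))).mp h' a (Finset.mem_univ a)
    exact Complex.normSq_eq_zero.mp h3
  -- orthonormal columns on the support
  set v : A → EuclideanSpace ℂ A :=
    fun i => WithLp.toLp 2 (((Real.sqrt (d i) : ℂ)⁻¹) • (fun a => T₁ a i)) with hv
  set s : Set A := {i | d i ≠ 0} with hs
  have hon : Orthonormal ℂ (s.restrict v) := by
    rw [orthonormal_iff_ite]
    intro ⟨i, hi⟩ ⟨j, hj⟩
    simp only [Set.restrict_apply, Subtype.mk_eq_mk]
    have hinner : (inner ℂ (v i) (v j) : ℂ) =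
        (starRingEnd ℂ) ((Real.sqrt (d i) : ℂ)⁻¹) * ((Real.sqrt (d j) : ℂ)⁻¹)
          * Matrix.diagonal (Complex.ofReal ∘ d) i j := by
      rw [← hcol i j]
      simp only [hv, PiLp.inner_apply, RCLike.inner_apply, PiLp.toLp_apply, Pi.smul_apply, smul_eq_mul,
        _root_.map_mul, Finset.mul_sum]
      apply Finset.sum_congr rfl
      intro a _
      ring
    by_cases hij : i = j
    · subst hij
      rw [if_pos rfl, show s.restrict v ⟨i, hi⟩ = v i from rfl, hinner, Matrix.diagonal_apply_eq]
      simp only [Function.comp_apply]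
      have hdi : (0:ℝ) < d i := lt_of_le_of_ne (hdnn i) (Ne.symm hi)
      have hsi : (0:ℝ) < Real.sqrt (d i) := Real.sqrt_pos.mpr hdi
      have : (starRingEnd ℂ) ((Real.sqrt (d i) : ℂ)⁻¹) = (Real.sqrt (d i) : ℂ)⁻¹ := by
        simp [Complex.conj_ofReal]
      rw [this]
      rw [← Complex.ofReal_inv, ← Complex.ofReal_mul, ← Complex.ofReal_mul]
      norm_cast
      rw [← mul_inv]
      rw [Real.mul_self_sqrt (hdnn i)]
      field_simp
    · rw [if_neg hij, show s.restrict v ⟨i, hi⟩ = v i from rfl,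
        show s.restrict v ⟨j, hj⟩ = v j from rfl, hinner, Matrix.diagonal_apply_ne _ hij, mul_zero]
  -- extend to an orthonormal basis
  obtain ⟨b, hb⟩ := hon.exists_orthonormalBasis_extension_of_card_eq
    (finrank_euclideanSpace (𝕜 := ℂ) (ι := A))
  set V : Matrix A A ℂ := Matrix.of fun a i => b i a with hV
  have hVmem : V ∈ Matrix.unitaryGroup A ℂ := by
    rw [Matrix.mem_unitaryGroup_iff']
    ext i j
    have := orthonormal_iff_ite.mp b.orthonormal i j
    simp only [PiLp.inner_apply, RCLike.inner_apply] at this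
    simpa [Matrix.mul_apply, Matrix.conjTranspose_apply, hV, Matrix.one_apply,
      Matrix.star_eq_conjTranspose, mul_comm] using this
  have hT₁V : T₁ = V * Matrix.diagonal ((Complex.ofReal) ∘ Real.sqrt ∘ d) := by
    ext a j
    rw [Matrix.mul_diagonal]
    by_cases hj : d j = 0
    · simp [hzero j hj a, Function.comp_apply, hj]
    · have hjs : j ∈ s := hj
      have : V a j = v j a := by rw [hV]; simp only [Matrix.of_apply]; rw [hb j hjs]
      rw [this, hv]
      simp only [PiLp.toLp_apply, Pi.smul_apply, smul_eq_mul, Function.comp_apply]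
      have hsj : (Real.sqrt (d j) : ℂ) ≠ 0 := by
        simp only [ne_eq, Complex.ofReal_eq_zero]
        exact (Real.sqrt_pos.mpr (lt_of_le_of_ne (hdnn j) (Ne.symm hj))).ne'
      field_simp
  -- assemble
  refine ⟨V * star U, ?_, ?_⟩
  · exact (Matrix.unitaryGroup A ℂ).mul_mem hVmem (Unitary.star_mem hUmem)
  · rw [hsqrt]
    calc T = T₁ * star U := by rw [hT₁def, Matrix.mul_assoc, hUU', Matrix.mul_one]
      _ = V * Matrix.diagonal ((Complex.ofReal) ∘ Real.sqrt ∘ d) * star U := by rw [← hT₁V]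
      _ = V * star U * (U * Matrix.diagonal (Complex.ofReal ∘ Real.sqrt ∘ d) * star U) := by
          simp only [← Matrix.mul_assoc]
          rw [Matrix.mul_assoc V (star U) U, hUU, Matrix.mul_one]

lemma sqrt_congr {A : Type*} [Fintype A] [DecidableEq A] {M N : Matrix A A ℂ}
    (hM : M.PosSemidef) (hN : N.PosSemidef) (h : M = N) : hM.sqrt = hN.sqrt := by
  subst h; rfl

lemma trace_sqrt_comm_sq {A : Type*} [Fintype A] [DecidableEq A] (Z : Matrix A A ℂ)
    (hpolar : ∃ W ∈ Matrix.unitaryGroup A ℂ,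
      Z = W * (Matrix.posSemidef_conjTranspose_mul_self Z).sqrt) :
    (Matrix.posSemidef_conjTranspose_mul_self Z).sqrt.trace
      = (Matrix.posSemidef_self_mul_conjTranspose Z).sqrt.trace := by
  obtain ⟨W, hW, hZ⟩ := hpolar
  set hG := Matrix.posSemidef_conjTranspose_mul_self Z with hGdef
  have h1 : star W * W = 1 := Matrix.mem_unitaryGroup_iff'.mp hW
  have hherm : hG.sqrt.conjTranspose = hG.sqrt := hG.posSemidef_sqrt.1
  have key : W * hG.sqrt * star W = (Matrix.posSemidef_self_mul_conjTranspose Z).sqrt := by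
    apply Matrix.PosSemidef.eq_sqrt_of_sq_eq
    · simpa [Matrix.star_eq_conjTranspose] using
        hG.posSemidef_sqrt.mul_mul_conjTranspose_same W
    · rw [pow_two]
      have hmid : ∀ X : Matrix A A ℂ, star W * (W * X) = X := fun X => by
        rw [← Matrix.mul_assoc, h1, Matrix.one_mul]
      have e2 : Z * Zᴴ = W * hG.sqrt * (hG.sqrt * star W) := by
        conv_lhs => rw [hZ]
        rw [Matrix.conjTranspose_mul, hherm, Matrix.star_eq_conjTranspose, Matrix.mul_assoc]
      rw [e2]
      simp only [Matrix.mul_assoc, hmid]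
  rw [← key, Matrix.trace_mul_cycle, h1, Matrix.one_mul]

lemma posSemidef_fromBlocks_diag {A B : Type*} [Fintype A] [Fintype B]
    [DecidableEq A] [DecidableEq B]
    {M : Matrix A A ℂ} {N : Matrix B B ℂ} (hM : M.PosSemidef) (hN : N.PosSemidef) :
    (Matrix.fromBlocks M 0 0 N).PosSemidef := by
  have h : Matrix.fromBlocks M 0 0 N
      = (Matrix.fromBlocks hM.sqrt 0 0 hN.sqrt)ᴴ * (Matrix.fromBlocks hM.sqrt 0 0 hN.sqrt) := by
    rw [Matrix.fromBlocks_conjTranspose, Matrix.fromBlocks_multiply]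
    simp [hM.posSemidef_sqrt.1.eq, hN.posSemidef_sqrt.1.eq, hM.sqrt_mul_self, hN.sqrt_mul_self,
      Matrix.IsHermitian.eq hM.posSemidef_sqrt.1]
  rw [h]
  exact Matrix.posSemidef_conjTranspose_mul_self _

lemma trace_fromBlocks' {A B : Type*} [Fintype A] [Fintype B]
    (M : Matrix A A ℂ) (Bm : Matrix A B ℂ) (C : Matrix B A ℂ) (N : Matrix B B ℂ) :
    (Matrix.fromBlocks M Bm C N).trace = M.trace + N.trace := by
  simp [Matrix.trace, Fintype.sum_sum_type, Matrix.fromBlocks]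

lemma trace_sqrt_swap {A B : Type*} [Fintype A] [Fintype B] [DecidableEq A] [DecidableEq B]
    (Y : Matrix B A ℂ)
    (hpolar : ∀ (Z : Matrix (A ⊕ B) (A ⊕ B) ℂ), ∃ W ∈ Matrix.unitaryGroup (A ⊕ B) ℂ,
      Z = W * (Matrix.posSemidef_conjTranspose_mul_self Z).sqrt) :
    (Matrix.posSemidef_conjTranspose_mul_self Y).sqrt.trace
      = (Matrix.posSemidef_self_mul_conjTranspose Y).sqrt.trace := by
  set Z : Matrix (A ⊕ B) (A ⊕ B) ℂ := Matrix.fromBlocks 0 0 Y 0 with hZ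
  have hZZ : Zᴴ * Z = Matrix.fromBlocks (Yᴴ * Y) 0 0 0 := by
    rw [hZ, Matrix.fromBlocks_conjTranspose, Matrix.fromBlocks_multiply]
    simp
  have hZZ' : Z * Zᴴ = Matrix.fromBlocks 0 0 0 (Y * Yᴴ) := by
    rw [hZ, Matrix.fromBlocks_conjTranspose, Matrix.fromBlocks_multiply]
    simp
  have h1 : (Matrix.posSemidef_conjTranspose_mul_self Z).sqrt
      = Matrix.fromBlocks (Matrix.posSemidef_conjTranspose_mul_self Y).sqrt 0 0 0 := by
    symm
    apply Matrix.PosSemidef.eq_sqrt_of_sq_eq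
    · exact posSemidef_fromBlocks_diag
        (Matrix.posSemidef_conjTranspose_mul_self Y).posSemidef_sqrt Matrix.PosSemidef.zero
    · rw [pow_two, Matrix.fromBlocks_multiply, hZZ]
      simp [(Matrix.posSemidef_conjTranspose_mul_self Y).sqrt_mul_self]
  have h2 : (Matrix.posSemidef_self_mul_conjTranspose Z).sqrt
      = Matrix.fromBlocks 0 0 0 (Matrix.posSemidef_self_mul_conjTranspose Y).sqrt := by
    symm
    apply Matrix.PosSemidef.eq_sqrt_of_sq_eq
    · exact posSemidef_fromBlocks_diag Matrix.PosSemidef.zero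
        (Matrix.posSemidef_self_mul_conjTranspose Y).posSemidef_sqrt
    · rw [pow_two, Matrix.fromBlocks_multiply, hZZ']
      simp [(Matrix.posSemidef_self_mul_conjTranspose Y).sqrt_mul_self]
  have h3 := trace_sqrt_comm_sq Z (hpolar Z)
  rw [h1, h2, trace_fromBlocks', trace_fromBlocks'] at h3
  simpa using h3


lemma conj_mem_unitaryGroup {A : Type*} [Fintype A] [DecidableEq A] {W : Matrix A A ℂ}
    (hW : W ∈ Matrix.unitaryGroup A ℂ) : (Wᴴ)ᵀ ∈ Matrix.unitaryGroup A ℂ := by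
  rw [Matrix.mem_unitaryGroup_iff']
  have h := Matrix.mem_unitaryGroup_iff'.mp hW
  rw [Matrix.star_eq_conjTranspose] at h
  have hstar : star ((Wᴴ)ᵀ) = Wᵀ := by
    ext i j
    simp [Matrix.conjTranspose_apply, Matrix.transpose_apply]
  rw [hstar, ← Matrix.transpose_mul, h, Matrix.transpose_one]

lemma psd_trace_nonneg {B : Type*} [Fintype B] [DecidableEq B] {M : Matrix B B ℂ} (hM : M.PosSemidef) :
    0 ≤ M.trace := by
  exact hM.trace_nonneg

lemma overlap_eq {A B : Type*} [Fintype A] [Fintype B] [DecidableEq B]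
    (W : Matrix A A ℂ) (φ₀ φ₁ : A × B → ℂ) :
    ∑ k : A × B, (starRingEnd ℂ) ((kronId ((Wᴴ)ᵀ)).mulVec φ₀ k) * φ₁ k
      = (W * ((Matrix.of fun (b : B) (a : A) => φ₀ (a, b))ᴴ
          * (Matrix.of fun (b : B) (a : A) => φ₁ (a, b)))).trace := by
  have hmv : ∀ (a : A) (b : B),
      (kronId ((Wᴴ)ᵀ)).mulVec φ₀ (a, b) = ∑ x, (Wᴴ)ᵀ a x * φ₀ (x, b) := by
    intro a b
    simp only [Matrix.mulVec, dotProduct, kronId, Fintype.sum_prod_type,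
      Matrix.kroneckerMap_apply, Matrix.one_apply, mul_ite, mul_one, mul_zero]
    apply Finset.sum_congr rfl
    intro x _
    simp
  calc ∑ k : A × B, (starRingEnd ℂ) ((kronId ((Wᴴ)ᵀ)).mulVec φ₀ k) * φ₁ k
      = ∑ a, ∑ x, ∑ b, W a x * ((starRingEnd ℂ) (φ₀ (x, b)) * φ₁ (a, b)) := by
        rw [Fintype.sum_prod_type]
        apply Finset.sum_congr rfl
        intro a _
        rw [show (∑ b, (starRingEnd ℂ) ((kronId ((Wᴴ)ᵀ)).mulVec φ₀ (a, b)) * φ₁ (a, b))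
            = ∑ b, ∑ x, W a x * ((starRingEnd ℂ) (φ₀ (x, b)) * φ₁ (a, b)) from ?_,
          Finset.sum_comm]
        apply Finset.sum_congr rfl
        intro b _
        rw [hmv, map_sum, Finset.sum_mul]
        apply Finset.sum_congr rfl
        intro x _
        simp only [_root_.map_mul, Matrix.transpose_apply, Matrix.conjTranspose_apply,
          Complex.conj_conj, starRingEnd_apply, star_star]
        ring
    _ = _ := by
        simp only [Matrix.trace, Matrix.diag, Matrix.mul_apply, Matrix.conjTranspose_apply,
          Matrix.of_apply, Finset.mul_sum]
        apply Finset.sum_congr rfl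
        intro a _
        apply Finset.sum_congr rfl
        intro x _
        apply Finset.sum_congr rfl
        intro b _
        simp only [starRingEnd_apply]

/-- **Uhlmann's theorem (local-unitary form).** The fidelity of the reduced states is
attained as the overlap achievable by acting with a unitary on the `A` system alone. -/
theorem uhlmann_local_unitary
    {A B : Type*} [Fintype A] [Fintype B] [DecidableEq A] [DecidableEq B]
    (φ₀ φ₁ : A × B → ℂ)
    (h₀ : ∑ k : A × B, (starRingEnd ℂ) (φ₀ k) * φ₀ k = 1)
    (h₁ : ∑ k : A × B, (starRingEnd ℂ) (φ₁ k) * φ₁ k = 1) :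
    ∃ S ∈ Matrix.unitaryGroup A ℂ,
      ‖∑ k : A × B, (starRingEnd ℂ) ((kronId S).mulVec φ₀ k) * φ₁ k‖ =
        fidelity (ptrA_posSemidef φ₀) (ptrA_posSemidef φ₁) := by
  classical
  set P₀ : Matrix B A ℂ := Matrix.of fun b a => φ₀ (a, b) with hP₀
  set P₁ : Matrix B A ℂ := Matrix.of fun b a => φ₁ (a, b) with hP₁
  set hρ₀ : (ptrA φ₀).PosSemidef := ptrA_posSemidef φ₀ with hρ₀def
  set hρ₁ : (ptrA φ₁).PosSemidef := ptrA_posSemidef φ₁ with hρ₁def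
  set R : Matrix B B ℂ := hρ₀.sqrt with hRdef
  have hRH : Rᴴ = R := hρ₀.posSemidef_sqrt.1
  have hptr₀ : ptrA φ₀ = P₀ * P₀ᴴ := by
    ext j q
    simp [ptrA, Matrix.mul_apply, Matrix.conjTranspose_apply, hP₀]
  have hptr₁ : ptrA φ₁ = P₁ * P₁ᴴ := by
    ext j q
    simp [ptrA, Matrix.mul_apply, Matrix.conjTranspose_apply, hP₁]
  set T : Matrix A A ℂ := P₀ᴴ * P₁ with hTdef
  set Y : Matrix B A ℂ := R * P₁ with hYdef
  have hRR : R * R = P₀ * P₀ᴴ := by rw [← hptr₀, hRdef, hρ₀.sqrt_mul_self]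
  have hTY : Tᴴ * T = Yᴴ * Y := by
    rw [hTdef, hYdef, Matrix.conjTranspose_mul, Matrix.conjTranspose_mul,
      Matrix.conjTranspose_conjTranspose, hRH]
    calc P₁ᴴ * P₀ * (P₀ᴴ * P₁) = P₁ᴴ * (P₀ * P₀ᴴ) * P₁ := by
          simp only [Matrix.mul_assoc]
      _ = P₁ᴴ * (R * R) * P₁ := by rw [hRR]
      _ = P₁ᴴ * R * (R * P₁) := by simp only [Matrix.mul_assoc]
  have hYY : Y * Yᴴ = R * ptrA φ₁ * R := by
    rw [hYdef, Matrix.conjTranspose_mul, hRH, hptr₁]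
    simp only [Matrix.mul_assoc]
  obtain ⟨W₀, hW₀, hTpolar⟩ := polar_exists T
  have h1 : star W₀ * W₀ = 1 := Matrix.mem_unitaryGroup_iff'.mp hW₀
  have hW : star W₀ ∈ Matrix.unitaryGroup A ℂ := Unitary.star_mem hW₀
  refine ⟨((star W₀)ᴴ)ᵀ, conj_mem_unitaryGroup hW, ?_⟩
  rw [overlap_eq (star W₀) φ₀ φ₁]
  have htr : (star W₀ * (P₀ᴴ * P₁)).trace
      = (Matrix.posSemidef_conjTranspose_mul_self T).sqrt.trace := by
    rw [← hTdef]
    conv_lhs => rw [hTpolar]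
    rw [← Matrix.mul_assoc, h1, Matrix.one_mul]
  rw [htr]
  have h5 : (Matrix.posSemidef_conjTranspose_mul_self T).sqrt.trace
      = (sqrt_mul_mul_sqrt_posSemidef hρ₀ hρ₁).sqrt.trace := by
    rw [sqrt_congr (Matrix.posSemidef_conjTranspose_mul_self T)
      (Matrix.posSemidef_conjTranspose_mul_self Y) hTY]
    rw [trace_sqrt_swap Y (fun Z => polar_exists Z)]
    rw [sqrt_congr (Matrix.posSemidef_self_mul_conjTranspose Y)
      (sqrt_mul_mul_sqrt_posSemidef hρ₀ hρ₁) hYY]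
  rw [h5]
  set c : ℂ := (sqrt_mul_mul_sqrt_posSemidef hρ₀ hρ₁).sqrt.trace with hcdef
  have hcnn : 0 ≤ c := psd_trace_nonneg (sqrt_mul_mul_sqrt_posSemidef hρ₀ hρ₁).posSemidef_sqrt
  have hre : 0 ≤ c.re := (Complex.le_def.mp hcnn).1
  have him : c.im = 0 := ((Complex.le_def.mp hcnn).2).symm
  have hc : c = (c.re : ℂ) := Complex.ext rfl (by simp [him])
  rw [fidelity]
  rw [← hcdef, hc, Complex.norm_real, Real.norm_eq_abs, abs_of_nonneg hre]
  simp
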